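/- For every injective analytic polynomial p(z) = z + a_2 z^2 on the unit disk (so |a_2| ≤ 1/2), the image p(𝔻) contains the open disk of radius 1/2 about 0, and for |a_2| = 1/2 the image does not contain any open disk of radius r > 1/2 about 0. -/

import Mathlib

theorem stmt_1 (a₂ : ℂ)
    (hinj : Set.InjOn (fun z : ℂ => z + a₂ * z ^ 2) (Metric.ball 0 1)) :
    Metric.ball (0 : ℂ) (1 / 2) ⊆ (fun z : ℂ => z + a₂ * z ^ 2) '' Metric.ball 0 1 ∧
      (‖a₂‖ = 1 / 2 → ∀ r : ℝ, 1 / 2 < r →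
        ¬ Metric.ball (0 : ℂ) r ⊆ (fun z : ℂ => z + a₂ * z ^ 2) '' Metric.ball 0 1) := by
  have h2 : ‖(2:ℂ)‖ = 2 := by simp
  -- Step 1: injectivity forces ‖a₂‖ ≤ 1/2
  have ha2 : ‖a₂‖ ≤ 1 / 2 := by
    by_contra h
    push_neg at h
    have ha : a₂ ≠ 0 := by
      intro h0
      rw [h0] at h; simp at h; linarith
    set c : ℂ := -(2 * a₂)⁻¹ with hc
    have hcn : ‖c‖ < 1 := by
      rw [hc, norm_neg, norm_inv, norm_mul, h2]
      rw [inv_lt_one_iff₀]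
      right
      nlinarith
    set ε : ℝ := (1 - ‖c‖) / 2 with hε
    have hεpos : 0 < ε := by rw [hε]; linarith
    have hmem1 : (c + (ε:ℂ)) ∈ Metric.ball (0:ℂ) 1 := by
      rw [Metric.mem_ball, dist_zero_right]
      calc ‖c + (ε:ℂ)‖ ≤ ‖c‖ + ‖(ε:ℂ)‖ := norm_add_le _ _
        _ = ‖c‖ + ε := by rw [Complex.norm_real, Real.norm_of_nonneg hεpos.le]
        _ < 1 := by rw [hε]; linarith
    have hmem2 : (c - (ε:ℂ)) ∈ Metric.ball (0:ℂ) 1 := by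
      rw [Metric.mem_ball, dist_zero_right]
      calc ‖c - (ε:ℂ)‖ ≤ ‖c‖ + ‖(ε:ℂ)‖ := norm_sub_le _ _
        _ = ‖c‖ + ε := by rw [Complex.norm_real, Real.norm_of_nonneg hεpos.le]
        _ < 1 := by rw [hε]; linarith
    have hac : 2 * a₂ * c = -1 := by
      rw [hc]; field_simp
    have heq : (fun z : ℂ => z + a₂ * z ^ 2) (c + (ε:ℂ)) =
        (fun z : ℂ => z + a₂ * z ^ 2) (c - (ε:ℂ)) := by
      simp only
      linear_combination 2 * (ε:ℂ) * hac
    have := hinj hmem1 hmem2 heq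
    have hε0 : (ε:ℂ) = 0 := by linear_combination this / 2
    rw [Complex.ofReal_eq_zero] at hε0
    linarith
  constructor
  · -- Part 1
    intro w hw
    rw [Metric.mem_ball, dist_zero_right] at hw
    set u : ℂ := 1 + 4 * a₂ * w with hu
    have hure : 0 < u.re := by
      have h1 : |(4 * a₂ * w).re| ≤ ‖4 * a₂ * w‖ := Complex.abs_re_le_norm _
      have h2' : ‖4 * a₂ * w‖ < 1 := by
        rw [norm_mul, norm_mul]
        have : ‖(4:ℂ)‖ = 4 := by simp
        rw [this]
        nlinarith [norm_nonneg a₂, norm_nonneg w]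
      have : u.re = 1 + (4 * a₂ * w).re := by
        rw [hu]; simp
      rw [this]
      cases' abs_le.mp h1 with h1a h1b
      linarith
    have hune : u ≠ 0 := by
      intro h0; rw [h0] at hure; simp at hure
    set s₀ : ℂ := u ^ ((2:ℂ)⁻¹) with hs₀
    have hs₀sq : s₀ ^ 2 = u := by
      rw [hs₀]
      have h := Complex.cpow_nat_inv_pow u (two_ne_zero (α := ℕ))
      simp only [Nat.cast_ofNat] at h
      exact h
    set s : ℂ := if 0 ≤ s₀.re then s₀ else -s₀ with hs
    have hssq : s ^ 2 = u := by
      rw [hs]; split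
      · exact hs₀sq
      · rw [neg_sq]; exact hs₀sq
    have hssq' : s ^ 2 = 1 + 4 * a₂ * w := by rw [hssq, hu]
    have hsre0 : 0 ≤ s.re := by
      rw [hs]; split
      · assumption
      · simp only [Complex.neg_re]; push_neg at *; linarith
    have hsre : 0 < s.re := by
      have hre := congrArg Complex.re hssq
      simp only [pow_two, Complex.mul_re] at hre
      nlinarith [sq_nonneg s.im]
    have h1s : 1 < ‖1 + s‖ := by
      have : (1 + s).re ≤ ‖1 + s‖ := by
        have := Complex.re_le_norm (1 + s)
        simpa using this
      have hre : (1 + s).re = 1 + s.re := by simp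
      linarith
    have h1sne : (1 : ℂ) + s ≠ 0 := by
      intro h0; rw [h0] at h1s; simp at h1s; linarith
    refine ⟨2 * w / (1 + s), ?_, ?_⟩
    · rw [Metric.mem_ball, dist_zero_right, norm_div, norm_mul, h2]
      rw [div_lt_one (by linarith)]
      linarith
    · simp only
      field_simp
      linear_combination (-w) * hssq'
  · -- Part 2
    intro hnorm r hr hsub
    have ha : a₂ ≠ 0 := by
      intro h0; rw [h0] at hnorm; simp at hnorm
    have hwmem : -(4 * a₂)⁻¹ ∈ Metric.ball (0:ℂ) r := by
      rw [Metric.mem_ball, dist_zero_right, norm_neg, norm_inv, norm_mul]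
      have h4 : ‖(4:ℂ)‖ = 4 := by simp
      rw [h4, hnorm]
      norm_num
      linarith
    obtain ⟨z, hz, hpz⟩ := hsub hwmem
    simp only at hpz
    rw [Metric.mem_ball, dist_zero_right] at hz
    have hsq : (2 * a₂ * z + 1) ^ 2 = 0 := by
      have h4a : (4 : ℂ) * a₂ ≠ 0 := by
        simp [ha]
      field_simp at hpz
      linear_combination hpz
    have hz' : 2 * a₂ * z + 1 = 0 := by
      exact pow_eq_zero_iff (by norm_num) |>.mp hsq
    have hzval : z = -(2 * a₂)⁻¹ := by
      field_simp
      linear_combination hz'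
    rw [hzval, norm_neg, norm_inv, norm_mul, h2, hnorm] at hz
    norm_num at hz
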